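/- Let T > 0 and let z : [0,T] → ℝ be continuous with z₀ ≥ 0. If (x, y) and (x̃, ỹ) are two pairs of continuous functions on [0,T] that both solve the Skorokhod problem for z, then x = x̃ and y = ỹ. Consequently, the solution is given explicitly by y_t = max_{s ∈ [0,t]} (z_s)⁻ and x_t = z_t + y_t. -/

import Mathlib

open MeasureTheory Set Filter Topology

noncomputable section

/-- `∫₀ᵗ x_s dy_s = 0` for all `t ∈ [0,T]`, where the integral is taken with respect to
the Lebesgue–Stieltjes measure of (any Stieltjes extension of) the nondecreasing
function `y` on `[0,T]`, extended by `0` to the left of `0` and by `y T` to the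
right of `T`. -/
def StieltjesIntegralZero (T : ℝ) (x y : ℝ → ℝ) : Prop :=
  ∀ Y : StieltjesFunction ℝ,
    (∀ t : ℝ, t ≤ 0 → Y t = 0) → (∀ t ∈ Set.Icc 0 T, Y t = y t) →
    (∀ t : ℝ, T ≤ t → Y t = y T) →
    ∀ t ∈ Set.Icc 0 T, ∫ s in Set.Icc (0 : ℝ) t, x s ∂Y.measure = 0

/-- `(x, y)` solves the Skorokhod problem for the continuous path `z` on `[0,T]`. -/
def SolvesSkorokhod (T : ℝ) (z x y : ℝ → ℝ) : Prop :=
  ContinuousOn x (Set.Icc 0 T) ∧ ContinuousOn y (Set.Icc 0 T) ∧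
  (∀ t ∈ Set.Icc 0 T, x t = z t + y t) ∧
  (∀ t ∈ Set.Icc 0 T, 0 ≤ x t) ∧
  y 0 = 0 ∧ MonotoneOn y (Set.Icc 0 T) ∧
  StieltjesIntegralZero T x y

namespace SkorokhodAux

/-- Stieltjes extension of a monotone continuous function on `[0,T]`. -/
def clampSF (T : ℝ) (hT : 0 ≤ T) (y : ℝ → ℝ)
    (hc : ContinuousOn y (Set.Icc 0 T)) (hm : MonotoneOn y (Set.Icc 0 T)) :
    StieltjesFunction ℝ where
  toFun := fun u => y (min T (max 0 u))
  mono' := fun a b hab =>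
    hm ⟨le_min hT (le_max_left _ _), min_le_left _ _⟩
      ⟨le_min hT (le_max_left _ _), min_le_left _ _⟩
      (min_le_min le_rfl (max_le_max le_rfl hab))
  right_continuous' := fun a => by
    have hcont : Continuous fun u : ℝ => y (min T (max 0 u)) := by
      have h1 : Continuous fun u : ℝ => min T (max 0 u) :=
        continuous_const.min (continuous_const.max continuous_id)
      exact hc.comp_continuous h1 fun u => ⟨le_min hT (le_max_left _ _), min_le_left _ _⟩
    exact hcont.continuousWithinAt

theorem clampSF_eq (T : ℝ) (hT : 0 ≤ T) (y : ℝ → ℝ)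
    (hc : ContinuousOn y (Set.Icc 0 T)) (hm : MonotoneOn y (Set.Icc 0 T))
    {t : ℝ} (ht : t ∈ Set.Icc 0 T) : clampSF T hT y hc hm t = y t := by
  show y (min T (max 0 t)) = y t
  rw [max_eq_right ht.1, min_eq_right ht.2]

theorem clampSF_le0 (T : ℝ) (hT : 0 ≤ T) (y : ℝ → ℝ)
    (hc : ContinuousOn y (Set.Icc 0 T)) (hm : MonotoneOn y (Set.Icc 0 T))
    {t : ℝ} (ht : t ≤ 0) : clampSF T hT y hc hm t = y 0 := by
  show y (min T (max 0 t)) = y 0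
  rw [max_eq_left ht, min_eq_right hT]

theorem clampSF_geT (T : ℝ) (hT : 0 ≤ T) (y : ℝ → ℝ)
    (hc : ContinuousOn y (Set.Icc 0 T)) (hm : MonotoneOn y (Set.Icc 0 T))
    {t : ℝ} (ht : T ≤ t) : clampSF T hT y hc hm t = y T := by
  show y (min T (max 0 t)) = y T
  rw [max_eq_right (hT.trans ht), min_eq_left ht]

/-- From the vanishing Stieltjes integral: the `y`-measure of any subinterval of
`[0,T]` on which `x > 0` is zero, hence `y` is flat there. -/
theorem flat_of_pos (T : ℝ) (hT : 0 < T) (z x y : ℝ → ℝ)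
    (h1 : SolvesSkorokhod T z x y)
    {s t : ℝ} (hs : s ∈ Set.Icc 0 T) (ht : t ∈ Set.Icc 0 T)
    (hpos : ∀ u ∈ Set.Ioc s t, 0 < x u) : y t ≤ y s := by
  obtain ⟨hx_cont, hy_cont, hxz, hx_nonneg, hy0, hy_mono, hy_int⟩ := h1
  set Y := clampSF T hT.le y hy_cont hy_mono with hY
  have hint : ∫ u in Set.Icc (0 : ℝ) T, x u ∂Y.measure = 0 := by
    refine hy_int Y (fun t ht => by rw [clampSF_le0 _ _ _ _ _ ht, hy0])
      (fun t ht => clampSF_eq _ _ _ _ _ ht) (fun t ht => clampSF_geT _ _ _ _ _ ht)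
      T ⟨hT.le, le_rfl⟩
  have hinteg : IntegrableOn x (Set.Icc 0 T) Y.measure :=
    hx_cont.integrableOn_compact isCompact_Icc
  have hae : x =ᵐ[Y.measure.restrict (Set.Icc 0 T)] 0 := by
    have h0 : 0 ≤ᵐ[Y.measure.restrict (Set.Icc 0 T)] x := by
      filter_upwards [ae_restrict_mem measurableSet_Icc] with u hu
      exact hx_nonneg u hu
    exact (integral_eq_zero_iff_of_nonneg_ae h0 hinteg).1 hint
  have hnull : Y.measure.restrict (Set.Icc 0 T) {u | x u ≠ 0} = 0 := by
    have := hae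
    rw [Filter.EventuallyEq, ae_iff] at this
    simpa using this
  have hsub : Set.Ioc s t ⊆ {u | x u ≠ 0} := fun u hu => (hpos u hu).ne'
  have hmeas : Y.measure (Set.Ioc s t) = 0 := by
    have h2 : Y.measure.restrict (Set.Icc 0 T) (Set.Ioc s t) = 0 :=
      measure_mono_null hsub hnull
    rwa [Measure.restrict_apply' measurableSet_Icc,
      Set.inter_eq_left.2 (Set.Ioc_subset_Icc_self.trans
        (Set.Icc_subset_Icc hs.1 ht.2))] at h2
  have := Y.measure_Ioc s t
  rw [hmeas] at this
  have h3 : Y t - Y s ≤ 0 := by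
    by_contra h
    push_neg at h
    rw [eq_comm, ENNReal.ofReal_eq_zero] at this
    linarith
  rw [clampSF_eq _ _ _ _ _ ht, clampSF_eq _ _ _ _ _ hs] at h3
  linarith

/-- Half of the uniqueness statement: `y ≤ yt` on `[0,T]`. -/
theorem y_le (T : ℝ) (hT : 0 < T) (z x y xt yt : ℝ → ℝ)
    (h1 : SolvesSkorokhod T z x y) (h2 : SolvesSkorokhod T z xt yt) :
    ∀ t ∈ Set.Icc 0 T, y t ≤ yt t := by
  intro t ht
  by_contra hlt
  push_neg at hlt
  obtain ⟨hx_cont, hy_cont, hxz, hx_nonneg, hy0, hy_mono, hy_int⟩ := h1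
  obtain ⟨hxt_cont, hyt_cont, hxtz, hxt_nonneg, hyt0, hyt_mono, _⟩ := h2
  set A := Set.Icc 0 t ∩ (fun u => y u - yt u) ⁻¹' Set.Iic 0 with hA
  have hsubT : Set.Icc (0:ℝ) t ⊆ Set.Icc 0 T := Set.Icc_subset_Icc le_rfl ht.2
  have hA_closed : IsClosed A :=
    ContinuousOn.preimage_isClosed_of_isClosed
      ((hy_cont.mono hsubT).sub (hyt_cont.mono hsubT)) isClosed_Icc isClosed_Iic
  have h0A : (0:ℝ) ∈ A := by
    constructor
    · exact ⟨le_rfl, ht.1⟩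
    · simp [hy0, hyt0]
  have hA_bdd : BddAbove A := ⟨t, fun u hu => hu.1.2⟩
  set s := sSup A with hs
  have hsA : s ∈ A := hA_closed.csSup_mem ⟨0, h0A⟩ hA_bdd
  have hs_mem : s ∈ Set.Icc 0 T := hsubT hsA.1
  have hs_le_t : s ≤ t := hsA.1.2
  have hys : y s ≤ yt s := by simpa using hsA.2
  have hpos : ∀ u ∈ Set.Ioc s t, 0 < x u := by
    intro u hu
    have hu_mem : u ∈ Set.Icc 0 T := hsubT ⟨hsA.1.1.trans hu.1.le, hu.2⟩
    have hnA : u ∉ A := fun huA => absurd (le_csSup hA_bdd huA) (not_le.2 hu.1)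
    have hy_gt : yt u < y u := by
      by_contra h
      push_neg at h
      exact hnA ⟨⟨hsA.1.1.trans hu.1.le, hu.2⟩, by simpa using sub_nonpos.2 h⟩
    have := hxt_nonneg u hu_mem
    rw [hxtz u hu_mem] at this
    rw [hxz u hu_mem]
    linarith
  have hflat : y t ≤ y s :=
    flat_of_pos T hT z x y
      ⟨hx_cont, hy_cont, hxz, hx_nonneg, hy0, hy_mono, hy_int⟩ hs_mem ht hpos
  have : yt s ≤ yt t := hyt_mono hs_mem ht hs_le_t
  linarith

/-- The running maximum `t ↦ max_{s ∈ [0,t]} (z_s)⁻`. -/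
def runMax (z : ℝ → ℝ) (t : ℝ) : ℝ := sSup ((fun s => max 0 (-z s)) '' Set.Icc 0 t)

variable {T : ℝ} {z : ℝ → ℝ}

theorem g_contOn (hz_cont : ContinuousOn z (Set.Icc 0 T)) :
    ContinuousOn (fun s => max 0 (-z s)) (Set.Icc 0 T) :=
  ContinuousOn.sup continuousOn_const hz_cont.neg

theorem g_zero (hz0 : 0 ≤ z 0) : max 0 (-z 0) = 0 := max_eq_left (by linarith)

theorem runMax_bddAbove (hz_cont : ContinuousOn z (Set.Icc 0 T))
    {t : ℝ} (ht : t ∈ Set.Icc 0 T) :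
    BddAbove ((fun s => max 0 (-z s)) '' Set.Icc 0 t) :=
  (isCompact_Icc.image_of_continuousOn
    ((g_contOn hz_cont).mono (Set.Icc_subset_Icc le_rfl ht.2))).bddAbove

theorem le_runMax (hz_cont : ContinuousOn z (Set.Icc 0 T))
    {t : ℝ} (ht : t ∈ Set.Icc 0 T) {u : ℝ} (hu : u ∈ Set.Icc 0 t) :
    max 0 (-z u) ≤ runMax z t :=
  le_csSup (runMax_bddAbove hz_cont ht) (Set.mem_image_of_mem _ hu)

theorem runMax_nonneg (hz_cont : ContinuousOn z (Set.Icc 0 T)) (hz0 : 0 ≤ z 0)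
    {t : ℝ} (ht : t ∈ Set.Icc 0 T) : 0 ≤ runMax z t := by
  have := le_runMax hz_cont ht (Set.left_mem_Icc.2 ht.1)
  rw [g_zero hz0] at this
  exact this

theorem runMax_zero (hz0 : 0 ≤ z 0) : runMax z 0 = 0 := by
  rw [runMax, Set.Icc_self, Set.image_singleton, csSup_singleton, g_zero hz0]

theorem runMax_mono (hz_cont : ContinuousOn z (Set.Icc 0 T)) :
    MonotoneOn (runMax z) (Set.Icc 0 T) := by
  intro a ha b hb hab
  exact csSup_le_csSup (runMax_bddAbove hz_cont hb)
    (Set.Nonempty.image _ (Set.nonempty_Icc.2 ha.1))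
    (Set.image_mono (Set.Icc_subset_Icc le_rfl hab))

theorem runMax_attain (hz_cont : ContinuousOn z (Set.Icc 0 T))
    {t : ℝ} (ht : t ∈ Set.Icc 0 T) :
    ∃ s ∈ Set.Icc 0 t, runMax z t = max 0 (-z s) :=
  isCompact_Icc.exists_sSup_image_eq (Set.nonempty_Icc.2 ht.1)
    ((g_contOn hz_cont).mono (Set.Icc_subset_Icc le_rfl ht.2))

theorem runMax_contOn (hz_cont : ContinuousOn z (Set.Icc 0 T)) :
    ContinuousOn (runMax z) (Set.Icc 0 T) := by
  rw [Metric.continuousOn_iff]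
  intro b hb ε hε
  obtain ⟨δ, hδ, hunif⟩ := Metric.uniformContinuousOn_iff.1
    (isCompact_Icc.uniformContinuousOn_of_continuous (g_contOn hz_cont)) ε hε
  refine ⟨δ, hδ, fun a ha hab => ?_⟩
  have key : ∀ c d : ℝ, c ∈ Set.Icc 0 T → d ∈ Set.Icc 0 T → c ≤ d → d - c < δ →
      runMax z d < runMax z c + ε := by
    intro c d hc hd hcd hdist
    obtain ⟨s, hs, hsval⟩ := runMax_attain hz_cont hd
    rcases le_or_gt s c with h | h
    · have : max 0 (-z s) ≤ runMax z c := le_runMax hz_cont hc ⟨hs.1, h⟩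
      linarith [hsval ▸ this]
    · have hsT : s ∈ Set.Icc 0 T := ⟨hs.1, hs.2.trans hd.2⟩
      have hdist2 : dist s c < δ := by
        rw [Real.dist_eq, abs_of_nonneg (by linarith)]
        linarith [hs.2]
      have := hunif s hsT c hc hdist2
      rw [Real.dist_eq] at this
      have h2 : max 0 (-z s) < max 0 (-z c) + ε := by
        cases abs_lt.1 this; linarith
      have h3 : max 0 (-z c) ≤ runMax z c := le_runMax hz_cont hc ⟨hc.1, le_rfl⟩
      linarith [hsval ▸ h2]
  rw [Real.dist_eq] at hab ⊢
  rcases le_total a b with h | h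
  · have h1 := key a b ha hb h (by cases abs_lt.1 hab; linarith)
    have h2 := runMax_mono hz_cont ha hb h
    rw [abs_of_nonpos (by linarith)]
    linarith
  · have h1 := key b a hb ha h (by cases abs_lt.1 hab; linarith)
    have h2 := runMax_mono hz_cont hb ha h
    rw [abs_of_nonneg (by linarith)]
    linarith

/-- The explicit candidate `y* = runMax z` is flat on any open interval where
`x* = z + y*` is positive. -/
theorem flat_explicit (hz_cont : ContinuousOn z (Set.Icc 0 T)) (hz0 : 0 ≤ z 0)
    {t a b : ℝ} (ht : t ∈ Set.Icc 0 T)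
    (hab : Set.Ioo a b ⊆ Set.Ioo 0 t) (ha : a ∈ Set.Icc 0 t)
    (hpos : ∀ u ∈ Set.Ioo a b, 0 < z u + runMax z u) :
    ∀ b' ∈ Set.Ioo a b, runMax z b' = runMax z a := by
  intro b' hb'
  have hb't : b' ∈ Set.Ioo 0 t := hab hb'
  have hb'T : b' ∈ Set.Icc 0 T := ⟨hb't.1.le, hb't.2.le.trans ht.2⟩
  have haT : a ∈ Set.Icc 0 T := ⟨ha.1, ha.2.trans ht.2⟩
  have hmono := runMax_mono hz_cont haT hb'T hb'.1.le
  rcases eq_or_lt_of_le hmono with h | h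
  · exact h.symm
  · exfalso
    obtain ⟨s, hs, hsval⟩ := runMax_attain hz_cont hb'T
    have hsa : a < s := by
      by_contra hc
      push_neg at hc
      have := le_runMax hz_cont haT ⟨hs.1, hc⟩
      rw [← hsval] at this
      linarith
    have hsI : s ∈ Set.Ioo a b := ⟨hsa, lt_of_le_of_lt hs.2 hb'.2⟩
    have hsT : s ∈ Set.Icc 0 T := ⟨hs.1, (hs.2.trans hb't.2.le).trans ht.2⟩
    have h1 : runMax z s ≤ runMax z b' := runMax_mono hz_cont hsT hb'T hs.2
    have h2 : max 0 (-z s) ≤ runMax z s := le_runMax hz_cont hsT ⟨hs.1, le_rfl⟩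
    have heq : runMax z s = max 0 (-z s) := le_antisymm (hsval ▸ h1) h2
    have hgt : 0 < max 0 (-z s) := by
      have := runMax_nonneg hz_cont hz0 haT
      rw [← hsval] at *
      linarith
    have hzs : max 0 (-z s) = -z s :=
      max_eq_right (by rcases max_cases 0 (-z s) with ⟨h',_⟩|⟨h',_⟩ <;> linarith)
    have := hpos s hsI
    rw [heq, hzs] at this
    linarith

/-- The Stieltjes integral condition for the explicit candidate solution. -/
theorem explicit_integral_zero (hT : 0 < T)
    (hz_cont : ContinuousOn z (Set.Icc 0 T)) (hz0 : 0 ≤ z 0)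
    (Y : StieltjesFunction ℝ)
    (hY0 : ∀ u : ℝ, u ≤ 0 → Y u = 0)
    (hYicc : ∀ u ∈ Set.Icc 0 T, Y u = runMax z u)
    (hYT : ∀ u : ℝ, T ≤ u → Y u = runMax z T) :
    ∀ t ∈ Set.Icc 0 T, ∫ s in Set.Icc (0 : ℝ) t, (z s + runMax z s) ∂Y.measure = 0 := by
  intro t ht
  have ht0 : (0:ℝ) ≤ t := ht.1
  -- Y is continuous
  have hYcont : Continuous (Y : ℝ → ℝ) := by
    have hfun : (Y : ℝ → ℝ) = fun u => runMax z (min T (max 0 u)) := by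
      funext u
      rcases le_or_gt u 0 with h | h
      · rw [hY0 u h, max_eq_left h, min_eq_right hT.le, runMax_zero hz0]
      rcases le_or_gt u T with h2 | h2
      · rw [hYicc u ⟨h.le, h2⟩, max_eq_right h.le, min_eq_right h2]
      · rw [hYT u h2.le, max_eq_right (hT.le.trans h2.le), min_eq_left h2.le]
    rw [hfun]
    have h1 : Continuous fun u : ℝ => min T (max 0 u) :=
      continuous_const.min (continuous_const.max continuous_id)
    exact (runMax_contOn hz_cont).comp_continuous h1
      fun u => ⟨le_min hT.le (le_max_left _ _), min_le_left _ _⟩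
  have hleft : ∀ a : ℝ, Function.leftLim (Y : ℝ → ℝ) a = Y a := fun a =>
    leftLim_eq_of_tendsto
      ((hYcont.tendsto a).mono_left nhdsWithin_le_nhds)
  have hsing : ∀ a : ℝ, Y.measure {a} = 0 := by
    intro a
    rw [Y.measure_singleton, hleft, sub_self, ENNReal.ofReal_zero]
  -- flat intervals are null
  have hIoo : ∀ a b : ℝ, a ∈ Set.Icc 0 t → Set.Ioo a b ⊆ Set.Ioo 0 t →
      (∀ u ∈ Set.Ioo a b, 0 < z u + runMax z u) → Y.measure (Set.Ioo a b) = 0 := by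
    intro a b haI hsub hpos
    rcases le_or_gt b a with h | h
    · rw [Set.Ioo_eq_empty (by intro hc; exact absurd h (not_le.2 hc)), measure_empty]
    have hflat := flat_explicit hz_cont hz0 (⟨ht0, ht.2⟩ : t ∈ Set.Icc 0 T) hsub haI hpos
    have hYb : Y b = runMax z a := by
      have h1 : Tendsto (Y : ℝ → ℝ) (𝓝[<] b) (𝓝 (Y b)) :=
        (hYcont.tendsto b).mono_left nhdsWithin_le_nhds
      have h2 : Tendsto (Y : ℝ → ℝ) (𝓝[<] b) (𝓝 (runMax z a)) := by
        have hmem : Set.Ioo a b ∈ 𝓝[<] b := Ioo_mem_nhdsLT_of_mem ⟨h, le_rfl⟩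
        refine Tendsto.congr' ?_ tendsto_const_nhds
        filter_upwards [hmem] with u hu
        have huI : u ∈ Set.Ioo 0 t := hsub hu
        rw [hYicc u ⟨huI.1.le, huI.2.le.trans ht.2⟩, hflat u hu]
      exact tendsto_nhds_unique h1 h2
    rw [Y.measure_Ioo, hleft, hYb,
      hYicc a ⟨haI.1, haI.2.trans ht.2⟩, sub_self, ENNReal.ofReal_zero]
  -- the set where the integrand is positive is open away from `{0, t}`
  set W := Set.Ioo 0 t ∩ {u | 0 < z u + runMax z u} with hW
  have hW_open : IsOpen W := by
    rw [isOpen_iff_mem_nhds]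
    intro u hu
    have huT : Set.Icc (0:ℝ) T ∈ 𝓝 u :=
      Icc_mem_nhds hu.1.1 (hu.1.2.trans_le ht.2)
    have hcontu : ContinuousAt (fun u => z u + runMax z u) u :=
      (hz_cont.add (runMax_contOn hz_cont)).continuousAt huT
    exact Filter.inter_mem (Ioo_mem_nhds hu.1.1 hu.1.2)
      (hcontu.preimage_mem_nhds (Ioi_mem_nhds hu.2))
  have hW_null : Y.measure W = 0 := by
    rcases eq_empty_or_nonempty W with hWe | hWne
    · rw [hWe, measure_empty]
    have hex : ∀ u : W, ∃ pq : ℝ × ℝ, (u:ℝ) ∈ Set.Ioo pq.1 pq.2 ∧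
        Set.Ioo pq.1 pq.2 ⊆ W ∧ pq.1 ∈ Set.Icc 0 t := by
      rintro ⟨u, hu⟩
      obtain ⟨ε, hε, hball⟩ := Metric.isOpen_iff.1 hW_open u hu
      rw [Real.ball_eq_Ioo] at hball
      refine ⟨(max (u - ε) 0, min (u + ε) t), ⟨?_, ?_⟩, ?_, ?_, ?_⟩
      · exact max_lt (by linarith) hu.1.1
      · exact lt_min (by linarith) hu.1.2
      · exact (Set.Ioo_subset_Ioo (le_max_left _ _) (min_le_left _ _)).trans hball
      · exact le_max_right _ _
      · exact max_le (by linarith [hu.1.2]) ht0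
    choose pq hmem hsubW hfst using hex
    obtain ⟨Tc, hTc_count, hTc⟩ := TopologicalSpace.isOpen_iUnion_countable
      (fun u : W => Set.Ioo (pq u).1 (pq u).2) (fun _ => isOpen_Ioo)
    have hcover : W ⊆ ⋃ u ∈ Tc, Set.Ioo (pq u).1 (pq u).2 := by
      rw [hTc]
      intro u hu
      exact Set.mem_iUnion.2 ⟨⟨u, hu⟩, hmem ⟨u, hu⟩⟩
    refine measure_mono_null hcover ((measure_biUnion_null_iff hTc_count).2 ?_)
    intro u _
    refine hIoo _ _ (hfst u) ((hsubW u).trans (Set.inter_subset_left)) ?_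
    intro v hv
    exact (hsubW u hv).2
  have hN : Y.measure ({v | z v + runMax z v ≠ 0} ∩ Set.Icc 0 t) = 0 := by
    have hcover : {v | z v + runMax z v ≠ 0} ∩ Set.Icc 0 t ⊆ {0} ∪ ({t} ∪ W) := by
      rintro v ⟨hv, hvI⟩
      rcases eq_or_lt_of_le hvI.1 with h0 | h0
      · exact Or.inl (by simp [← h0])
      rcases eq_or_lt_of_le hvI.2 with h1 | h1
      · exact Or.inr (Or.inl (by simp [h1]))
      refine Or.inr (Or.inr ⟨⟨h0, h1⟩, ?_⟩)
      have hvT : v ∈ Set.Icc 0 T := ⟨hvI.1, hvI.2.trans ht.2⟩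
      have h2 : 0 ≤ z v + runMax z v := by
        have h3 := le_runMax hz_cont hvT (Set.right_mem_Icc.2 hvI.1)
        have h4 : -z v ≤ max 0 (-z v) := le_max_right _ _
        linarith
      exact lt_of_le_of_ne h2 (Ne.symm hv)
    refine measure_mono_null hcover ?_
    exact measure_union_null (hsing 0) (measure_union_null (hsing t) hW_null)
  have hzero : (fun u => z u + runMax z u) =ᵐ[Y.measure.restrict (Set.Icc 0 t)] 0 := by
    rw [Filter.EventuallyEq, ae_iff]
    rw [Measure.restrict_apply' measurableSet_Icc]
    simpa using hN
  exact integral_eq_zero_of_ae hzero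

/-- The explicit pair solves the Skorokhod problem. -/
theorem explicit_solves (hT : 0 < T)
    (hz_cont : ContinuousOn z (Set.Icc 0 T)) (hz0 : 0 ≤ z 0) :
    SolvesSkorokhod T z (fun t => z t + runMax z t) (runMax z) := by
  refine ⟨hz_cont.add (runMax_contOn hz_cont), runMax_contOn hz_cont,
    fun t ht => rfl, ?_, runMax_zero hz0, runMax_mono hz_cont, ?_⟩
  · intro t ht
    have h3 := le_runMax hz_cont ht (Set.right_mem_Icc.2 ht.1)
    have h4 : -z t ≤ max 0 (-z t) := le_max_right _ _
    show 0 ≤ z t + runMax z t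
    linarith
  · intro Y hY0 hYicc hYT t ht
    exact explicit_integral_zero hT hz_cont hz0 Y hY0 hYicc hYT t ht

end SkorokhodAux

/-- Uniqueness of the solution of the Skorokhod problem, together with the explicit
formula `y_t = max_{s ∈ [0,t]} (z_s)⁻`, `x_t = z_t + y_t`. -/
theorem skorokhod_uniqueness
    (T : ℝ) (hT : 0 < T) (z : ℝ → ℝ)
    (hz_cont : ContinuousOn z (Set.Icc 0 T)) (hz0 : 0 ≤ z 0)
    (x y xt yt : ℝ → ℝ)
    (h1 : SolvesSkorokhod T z x y) (h2 : SolvesSkorokhod T z xt yt) :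
    (∀ t ∈ Set.Icc 0 T, x t = xt t ∧ y t = yt t) ∧
    (∀ t ∈ Set.Icc 0 T,
      y t = sSup ((fun s => max 0 (-z s)) '' Set.Icc 0 t) ∧
      x t = z t + sSup ((fun s => max 0 (-z s)) '' Set.Icc 0 t)) := by
  have hexp := SkorokhodAux.explicit_solves hT hz_cont hz0
  constructor
  · intro t ht
    have h12 := SkorokhodAux.y_le T hT z x y xt yt h1 h2 t ht
    have h21 := SkorokhodAux.y_le T hT z xt yt x y h2 h1 t ht
    have hy : y t = yt t := le_antisymm h12 h21
    exact ⟨by rw [h1.2.2.1 t ht, h2.2.2.1 t ht, hy], hy⟩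
  · intro t ht
    have ha := SkorokhodAux.y_le T hT z x y _ _ h1 hexp t ht
    have hb := SkorokhodAux.y_le T hT z _ _ x y hexp h1 t ht
    have hy : y t = SkorokhodAux.runMax z t := le_antisymm ha hb
    have hdef : SkorokhodAux.runMax z t
        = sSup ((fun s => max 0 (-z s)) '' Set.Icc 0 t) := rfl
    refine ⟨by rw [hy, hdef], ?_⟩
    rw [h1.2.2.1 t ht, hy, hdef]
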